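/- arXiv:1307.2109 — 2 statements merged into one kernel-verified Lean document; each statement's English description precedes it below -/
import Mathlib

section
/- The sum of the squares of the quantum dimensions satisfies ∑_{n=0}^{r−2} Δ_n² = r/(2 sin²(π/r)); equivalently, (sin(π/r))² · (2/r) · ∑_{n=0}^{r−2} Δ_n² = 1. -/
open Finset

/-- `A = exp(πi/(2r))`, the first primitive `4r`-th root of unity. -/
noncomputable def A (r : ℕ) : ℂ := Complex.exp (Real.pi * Complex.I / (2 * r))

/-- The q-deformed quantum integer `[n] = (A^(2n) − A^(−2n))/(A² − A^(−2))`. -/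
noncomputable def qint (r n : ℕ) : ℂ :=
  ((A r) ^ (2 * n) - (A r) ^ (-(2 * (n : ℤ)))) / ((A r) ^ 2 - (A r) ^ (-2 : ℤ))

/-- `Δ_n = (−1)^n (A^(2n+2) − A^(−2n−2))/(A² − A^(−2))`. -/
noncomputable def Delta (r n : ℕ) : ℂ :=
  (-1) ^ n * ((A r) ^ (2 * n + 2) - (A r) ^ (-(2 * (n : ℤ)) - 2)) /
    ((A r) ^ 2 - (A r) ^ (-2 : ℤ))

/-- A triple `(a,b,c)` of elements of `I = {0,…,r−2}` is admissible if
`a+b+c ≤ 2r−4` and `a+b−c`, `b+c−a`, `c+a−b` are non-negative and even. -/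
def Admissible (r a b c : ℕ) : Prop :=
  a + b + c ≤ 2 * r - 4 ∧ c ≤ a + b ∧ a ≤ b + c ∧ b ≤ c + a ∧
    Even (a + b - c) ∧ Even (b + c - a) ∧ Even (c + a - b)

/-- The q-deformed quantum factorial `[n]! = ∏_{1 ≤ m ≤ n} [m]` (with `[0]! = 1`). -/
noncomputable def qfact (r n : ℕ) : ℂ := ∏ m ∈ Finset.Icc 1 n, qint r m

instance (r a b c : ℕ) : Decidable (Admissible r a b c) := by
  unfold Admissible; infer_instance

/-- `∑_{n=0}^{r−2} Δ_n² = r/(2 sin²(π/r))`; equivalently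
`sin²(π/r) · (2/r) · ∑_{n=0}^{r−2} Δ_n² = 1`. -/
theorem sum_Delta_sq (r : ℕ) (hr : 3 ≤ r) :
    (∑ n ∈ Finset.range (r - 1), (Delta r n) ^ 2 =
        (r : ℂ) / (2 * ((Real.sin (Real.pi / r) : ℝ) : ℂ) ^ 2)) ∧
      (((Real.sin (Real.pi / r) : ℝ) : ℂ) ^ 2 * (2 / (r : ℂ)) *
        ∑ n ∈ Finset.range (r - 1), (Delta r n) ^ 2 = 1) := by
  have hrpos : 0 < r := by omega
  have hrR : (3:ℝ) ≤ r := by exact_mod_cast hr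
  have hr0 : (r : ℂ) ≠ 0 := Nat.cast_ne_zero.mpr hrpos.ne'
  have hr0' : (r : ℝ) ≠ 0 := Nat.cast_ne_zero.mpr hrpos.ne'
  set s : ℝ := Real.sin (Real.pi / r) with hs
  have hπ := Real.pi_pos
  have hspos : 0 < s := Real.sin_pos_of_pos_of_lt_pi (by positivity)
    (by rw [div_lt_iff₀ (by positivity)]; nlinarith)
  have hsne : (s : ℂ) ≠ 0 := by exact_mod_cast hspos.ne'
  have hA0 : A r ≠ 0 := Complex.exp_ne_zero _
  set z : ℂ := Real.pi * Complex.I / (2 * r) with hz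
  have hApow : ∀ k : ℤ, (A r) ^ k = Complex.exp (k * z) := fun k => by
    rw [A, ← Complex.exp_int_mul]
  have hApownat : ∀ k : ℕ, (A r) ^ k = Complex.exp (k * z) := fun k => by
    rw [A, ← Complex.exp_nat_mul]
  -- denominator
  have hD : (A r) ^ 2 - (A r) ^ (-2 : ℤ) = 2 * Complex.I * (s : ℂ) := by
    rw [hApownat 2, hApow (-2)]
    have h2z : (2 : ℂ) * z = (↑(Real.pi / r) : ℂ) * Complex.I := by
      rw [hz]; push_cast; field_simp
    rw [show ((2:ℕ):ℂ) * z = (2:ℂ) * z by norm_num,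
      show ((-2 : ℤ) : ℂ) * z = -((2:ℂ) * z) by push_cast; ring, h2z]
    rw [hs, Complex.ofReal_sin, Complex.sin]
    have := Complex.I_sq
    field_simp
    ring_nf
    rw [Complex.I_sq]
    ring
  have hD2 : ((A r) ^ 2 - (A r) ^ (-2 : ℤ)) ^ 2 = -4 * (s:ℂ)^2 := by
    rw [hD]; linear_combination (4*(s:ℂ)^2) * Complex.I_sq
  -- ζ = A^4
  set ζ : ℂ := (A r) ^ 4 with hζ
  have hζ0 : ζ ≠ 0 := pow_ne_zero _ hA0
  have hζr : ζ ^ r = 1 := by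
    rw [hζ, ← pow_mul, hApownat, hz]
    have : ((4 * r : ℕ) : ℂ) * (Real.pi * Complex.I / (2 * r)) =
        2 * Real.pi * Complex.I := by push_cast; field_simp; ring
    rw [this, Complex.exp_two_pi_mul_I]
  have hζexp : ζ = Complex.exp ((↑(2 * Real.pi / r) : ℝ) * Complex.I) := by
    rw [hζ, hApownat, hz]; congr 1; push_cast; field_simp; ring
  have hζ1 : ζ ≠ 1 := by
    intro h
    have him : ζ.im = Real.sin (2 * Real.pi / r) := by
      rw [hζexp, Complex.exp_ofReal_mul_I_im]
    have hpos : 0 < Real.sin (2 * Real.pi / r) :=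
      Real.sin_pos_of_pos_of_lt_pi (by positivity)
        (by rw [div_lt_iff₀ (by positivity)]; nlinarith)
    rw [h] at him
    simp at him
    rw [← him] at hpos
    exact lt_irrefl _ hpos
  have hζi1 : ζ⁻¹ ≠ 1 := by
    simpa [inv_eq_one] using hζ1
  have hζir : (ζ⁻¹) ^ r = 1 := by rw [inv_pow, hζr, inv_one]
  -- geometric sums
  have hgeom : ∀ (w : ℂ), w ≠ 1 → w ^ r = 1 →
      ∑ n ∈ Finset.range (r - 1), w ^ (n + 1) = -1 := by
    intro w hw1 hwr
    have h0 : ∑ n ∈ Finset.range r, w ^ n = 0 := by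
      rw [geom_sum_eq hw1, hwr]; simp
    have h := Finset.sum_range_succ' (fun n => w ^ n) (r - 1)
    rw [Nat.sub_add_cancel (by omega), h0] at h
    simp only [pow_zero] at h
    linear_combination -h
  have hDelta : ∀ n : ℕ, (Delta r n) ^ 2 =
      (ζ ^ (n+1) + (ζ⁻¹) ^ (n+1) - 2) / (-4 * (s:ℂ)^2) := by
    intro n
    rw [Delta, div_pow, mul_pow, hD2, ← pow_mul]
    rw [show ((-1:ℂ)) ^ (n*2) = 1 by rw [pow_mul]; rcases neg_one_pow_eq_or ℂ n with h | h <;> rw [h] <;> norm_num, one_mul]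
    congr 1
    have e1 : ((A r) ^ (2*n+2)) ^ 2 = ζ ^ (n+1) := by
      rw [hζ, ← pow_mul, ← pow_mul]; congr 1; ring
    have e2 : ((A r) ^ (-(2*(n:ℤ)) - 2)) ^ 2 = (ζ⁻¹) ^ (n+1) := by
      have l : ζ⁻¹ = (A r) ^ (-4 : ℤ) := by
        rw [hζ, ← zpow_natCast (A r) 4, ← zpow_neg]; norm_num
      rw [l, ← zpow_natCast ((A r) ^ (-(2*(n:ℤ)) - 2)) 2, ← zpow_mul,
        ← zpow_natCast ((A r) ^ (-4 : ℤ)) (n+1), ← zpow_mul]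
      congr 1; push_cast; ring
    have e3 : (A r) ^ (2*n+2) * (A r) ^ (-(2*(n:ℤ)) - 2) = 1 := by
      rw [← zpow_natCast (A r) (2*n+2), ← zpow_add₀ hA0,
        show ((2*n+2 : ℕ) : ℤ) + (-(2*(n:ℤ)) - 2) = 0 by push_cast; ring, zpow_zero]
    rw [sub_sq, e1, e2]
    linear_combination (-2 : ℂ) * e3
  have heq : ∑ n ∈ Finset.range (r - 1), (Delta r n) ^ 2 = (r : ℂ) / (2 * (s:ℂ)^2) := by
    have h1 := hgeom ζ hζ1 hζr
    have h2 := hgeom ζ⁻¹ hζi1 hζir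
    rw [Finset.sum_congr rfl fun n _ => hDelta n]
    rw [← Finset.sum_div, Finset.sum_sub_distrib, Finset.sum_add_distrib, h1, h2,
      Finset.sum_const, Finset.card_range, nsmul_eq_mul]
    rw [Nat.cast_sub (by omega : 1 ≤ r)]
    push_cast
    field_simp
    ring
  refine ⟨heq, ?_⟩
  rw [heq]
  field_simp
end

section
/- The fusion rule for quantum dimensions holds: for all a, b ∈ I, Δ_a · Δ_b = ∑_{c ∈ I, (a,b,c) admissible} Δ_c. -/
open Finset

noncomputable def Sfn (q : ℂ) (n : ℤ) : ℂ := q ^ n - q ^ (-n)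

lemma A_ne_zero (r : ℕ) : A r ≠ 0 := Complex.exp_ne_zero _

lemma q_pow_r (r : ℕ) (hr : 3 ≤ r) : (A r ^ 2) ^ (r : ℤ) = -1 := by
  have hr0 : (r : ℂ) ≠ 0 := Nat.cast_ne_zero.2 (by omega)
  rw [zpow_natCast, ← pow_mul, A, ← Complex.exp_nat_mul]
  rw [show ((2 * r : ℕ) : ℂ) * (Real.pi * Complex.I / (2 * r)) = Real.pi * Complex.I by
    push_cast; field_simp]
  exact Complex.exp_pi_mul_I

lemma q_sq_ne_one (r : ℕ) (hr : 3 ≤ r) : (A r ^ 2) ^ 2 ≠ 1 := by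
  have hr0 : (r : ℂ) ≠ 0 := Nat.cast_ne_zero.2 (by omega)
  rw [← pow_mul, A, ← Complex.exp_nat_mul]
  rw [show ((2 * 2 : ℕ) : ℂ) * (Real.pi * Complex.I / (2 * r)) = 2 * Real.pi * Complex.I / r by
    push_cast; field_simp; ring]
  intro h
  rw [Complex.exp_eq_one_iff] at h
  obtain ⟨n, hn⟩ := h
  rw [div_eq_iff hr0] at hn
  have hpi : (2 * Real.pi * Complex.I : ℂ) ≠ 0 := by
    simp [Complex.I_ne_zero, Real.pi_ne_zero, Complex.ofReal_ne_zero]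
  have h1 : (2 * Real.pi * Complex.I : ℂ) * 1 = (2 * Real.pi * Complex.I) * (n * r) := by
    linear_combination hn
  have h2 := mul_left_cancel₀ hpi h1
  have h3 : ((1 : ℤ) : ℂ) = ((n * r : ℤ) : ℂ) := by push_cast; linear_combination h2
  have h4 : (1 : ℤ) = n * r := by exact_mod_cast h3
  have h5 : (r : ℤ) ∣ 1 := Dvd.intro_left n h4.symm
  have := Int.le_of_dvd one_pos h5
  omega

lemma Sfn_alg (q : ℂ) (hq : q ≠ 0) (x z : ℤ) :
    Sfn q x * Sfn q (z + 1) = Sfn q 1 * Sfn q (x + z) + Sfn q (x - 1) * Sfn q z := by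
  have hx : q ^ x ≠ 0 := zpow_ne_zero _ hq
  have hz : q ^ z ≠ 0 := zpow_ne_zero _ hq
  simp only [Sfn, neg_add, neg_sub, zpow_add₀ hq, zpow_sub₀ hq, zpow_neg, zpow_one]
  field_simp
  ring

lemma Sfn_tele (q : ℂ) (hq : q ≠ 0) :
    ∀ (y : ℕ) (x : ℤ), Sfn q x * Sfn q y =
      Sfn q 1 * ∑ j ∈ Finset.range y, Sfn q (x + y - 1 - 2 * j) := by
  intro y
  induction y with
  | zero => intro x; simp [Sfn]
  | succ y ih =>
    intro x
    have hc : ((y + 1 : ℕ) : ℤ) = (y : ℤ) + 1 := by push_cast; ring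
    rw [hc, Sfn_alg q hq x y, ih (x - 1),
      Finset.sum_range_succ' (fun j => Sfn q (x + ((y:ℤ) + 1) - 1 - 2 * j)) y,
      mul_add, add_comm]
    congr 1
    · rw [Finset.mul_sum, Finset.mul_sum]
      apply Finset.sum_congr rfl
      intro j _
      congr 2
      push_cast
      ring
    · congr 2
      push_cast
      ring

lemma Sfn_refl (q : ℂ) (hq : q ≠ 0) (r : ℕ) (hqr : q ^ (r : ℤ) = -1) (m : ℤ) :
    Sfn q ((r : ℤ) + m) = - Sfn q ((r : ℤ) - m) := by
  have hm : q ^ m ≠ 0 := zpow_ne_zero _ hq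
  simp only [Sfn, neg_add, neg_sub, zpow_add₀ hq, zpow_sub₀ hq, zpow_neg, hqr]
  field_simp

lemma Sfn_head (q : ℂ) (hq : q ≠ 0) (r : ℕ) (hqr : q ^ (r : ℤ) = -1) (t : ℕ) :
    ∑ j ∈ Finset.range (t + 1), Sfn q ((r : ℤ) + t - 2 * j) = 0 := by
  have hrefl := Finset.sum_range_reflect (fun j => Sfn q ((r : ℤ) + t - 2 * j)) (t + 1)
  have hpt : ∀ j ∈ Finset.range (t + 1),
      Sfn q ((r : ℤ) + t - 2 * ((t + 1 - 1 - j : ℕ) : ℤ)) = - Sfn q ((r : ℤ) + t - 2 * j) := by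
    intro j hj
    rw [Finset.mem_range] at hj
    have h1 : ((r : ℤ) + t - 2 * ((t + 1 - 1 - j : ℕ) : ℤ)) = (r : ℤ) - ((t : ℤ) - 2 * j) := by
      have : ((t + 1 - 1 - j : ℕ) : ℤ) = (t : ℤ) - j := by omega
      rw [this]; ring
    have h2 : ((r : ℤ) + (t : ℤ) - 2 * j) = (r : ℤ) + ((t : ℤ) - 2 * j) := by ring
    rw [h1, h2, Sfn_refl q hq r hqr, neg_neg]
  rw [Finset.sum_congr rfl hpt] at hrefl
  rw [Finset.sum_neg_distrib] at hrefl
  have : (2 : ℂ) * ∑ j ∈ Finset.range (t + 1), Sfn q ((r : ℤ) + t - 2 * j) = 0 := by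
    linear_combination - hrefl
  have h2 : (2 : ℂ) ≠ 0 := two_ne_zero
  exact (mul_eq_zero.1 this).resolve_left h2

lemma key (r a b : ℕ) (q : ℂ) (hq : q ≠ 0) (hqr : q ^ (r : ℤ) = -1) (hr : 3 ≤ r)
    (ha : a ≤ r - 2) (hb : b ≤ r - 2) (hba : b ≤ a) :
    Sfn q ((a : ℤ) + 1) * Sfn q ((b : ℤ) + 1) =
      Sfn q 1 * ∑ c ∈ Finset.range (r - 1),
        (if Admissible r a b c then Sfn q ((c : ℤ) + 1) else 0) := by
  have h0 : ((b : ℤ) + 1) = ((b + 1 : ℕ) : ℤ) := by push_cast; ring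
  rw [h0, Sfn_tele q hq (b + 1) ((a : ℤ) + 1)]
  congr 1
  have hterm : ∀ j ∈ Finset.range (b + 1),
      Sfn q ((a : ℤ) + 1 + ((b + 1 : ℕ) : ℤ) - 1 - 2 * j) = Sfn q ((a : ℤ) + b + 1 - 2 * j) := by
    intro j _; congr 1; push_cast; ring
  rw [Finset.sum_congr rfl hterm]
  set j0 : ℕ := a + b + 2 - r with hj0
  have hj0b : j0 ≤ b + 1 := by omega
  rw [Finset.range_eq_Ico, ← Finset.sum_Ico_consecutive _ (Nat.zero_le j0) hj0b]
  have hhead : ∑ j ∈ Finset.Ico 0 j0, Sfn q ((a : ℤ) + b + 1 - 2 * j) = 0 := by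
    rw [← Finset.range_eq_Ico]
    rcases Nat.lt_or_ge (a + b + 1) r with hc | hc
    · have : j0 = 0 := by omega
      rw [this]; simp
    · have hj0t : j0 = (a + b + 1 - r) + 1 := by omega
      have hcast : ∀ j ∈ Finset.range ((a + b + 1 - r) + 1),
          Sfn q ((a : ℤ) + b + 1 - 2 * j) = Sfn q ((r : ℤ) + (a + b + 1 - r : ℕ) - 2 * j) := by
        intro j _
        have he : ((a : ℤ) + b + 1 - 2 * j) = ((r : ℤ) + (a + b + 1 - r : ℕ) - 2 * j) := by
          omega
        rw [he]
      rw [hj0t, Finset.sum_congr rfl hcast, Sfn_head q hq r hqr (a + b + 1 - r)]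
  rw [hhead, zero_add]
  rw [← Finset.sum_filter]
  have hset : Finset.filter (fun c => Admissible r a b c) (Finset.range (r - 1)) =
      Finset.image (fun j => a + b - 2 * j) (Finset.Ico j0 (b + 1)) := by
    ext c
    simp only [Finset.mem_filter, Finset.mem_range, Finset.mem_image, Finset.mem_Ico,
      Admissible, Nat.even_iff]
    constructor
    · rintro ⟨h1, h2, h3, h4, h5, h6, h7, h8⟩
      exact ⟨(a + b - c) / 2, by omega, by omega⟩
    · rintro ⟨j, hj, rfl⟩
      omega
  rw [hset, Finset.sum_image (by intro x hx y hy h; simp only [Finset.mem_coe, Finset.mem_Ico] at hx hy h; omega)]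
  apply Finset.sum_congr rfl
  intro j hj
  simp only [Finset.mem_Ico] at hj
  congr 1
  omega

lemma Delta_eq (r n : ℕ) :
    Delta r n = (-1) ^ n * Sfn (A r ^ 2) ((n : ℤ) + 1) / Sfn (A r ^ 2) 1 := by
  unfold Delta Sfn
  have hA : A r ≠ 0 := A_ne_zero r
  have h1 : ((A r) ^ 2) ^ ((n : ℤ) + 1) = A r ^ (2 * n + 2) := by
    rw [show ((n : ℤ) + 1) = ((n + 1 : ℕ) : ℤ) by push_cast; ring, zpow_natCast, ← pow_mul]
    congr 1
  have h2 : ((A r) ^ 2) ^ (-((n : ℤ) + 1)) = A r ^ (-(2 * (n : ℤ)) - 2) := by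
    rw [show (-((n : ℤ) + 1)) = -((n + 1 : ℕ) : ℤ) by push_cast; ring, zpow_neg, zpow_natCast,
      ← pow_mul, show (-(2 * (n : ℤ)) - 2) = -((2 * (n + 1) : ℕ) : ℤ) by push_cast; ring,
      zpow_neg, zpow_natCast]
  have h3 : ((A r) ^ 2) ^ (1 : ℤ) = A r ^ 2 := zpow_one _
  have h4 : ((A r) ^ 2) ^ (-(1 : ℤ)) = A r ^ (-2 : ℤ) := by
    rw [zpow_neg, zpow_one, show (-2 : ℤ) = -((2 : ℕ) : ℤ) by norm_num, zpow_neg, zpow_natCast]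
  rw [h1, h2, h3, h4]

lemma S1_ne_zero (r : ℕ) (hr : 3 ≤ r) : Sfn (A r ^ 2) 1 ≠ 0 := by
  intro h
  apply q_sq_ne_one r hr
  have hq : A r ^ 2 ≠ 0 := pow_ne_zero _ (A_ne_zero r)
  have h2 : (A r ^ 2) ^ (1 : ℤ) = (A r ^ 2) ^ (-1 : ℤ) := sub_eq_zero.mp h
  have h3 : (A r ^ 2) ^ 2 = (A r ^ 2) ^ (1 : ℤ) * (A r ^ 2) := by
    rw [zpow_one]; ring
  rw [h3, h2, zpow_neg, zpow_one, inv_mul_cancel₀ hq]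

lemma Admissible_symm (r a b c : ℕ) : Admissible r a b c ↔ Admissible r b a c := by
  simp only [Admissible, Nat.even_iff]
  omega

lemma neg_one_pow_adm (a b c : ℕ) (hc : c ≤ a + b) (he : Even (a + b - c)) :
    ((-1 : ℂ)) ^ c = (-1) ^ a * (-1) ^ b := by
  obtain ⟨k, hk⟩ := he
  have hab : a + b = c + 2 * k := by omega
  rw [← pow_add, hab, pow_add, pow_mul]
  norm_num

lemma fusion_aux (r a b : ℕ) (hr : 3 ≤ r) (ha : a ≤ r - 2) (hb : b ≤ r - 2) (hba : b ≤ a) :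
    Delta r a * Delta r b =
      ∑ c ∈ Finset.range (r - 1), if Admissible r a b c then Delta r c else 0 := by
  set q : ℂ := A r ^ 2 with hqdef
  have hq : q ≠ 0 := pow_ne_zero _ (A_ne_zero r)
  have hqr : q ^ (r : ℤ) = -1 := q_pow_r r hr
  have hS1 : Sfn q 1 ≠ 0 := S1_ne_zero r hr
  have hkey := key r a b q hq hqr hr ha hb hba
  have hsum : (∑ c ∈ Finset.range (r - 1), if Admissible r a b c then Delta r c else 0)
      = (-1) ^ a * (-1) ^ b / Sfn q 1 *
        ∑ c ∈ Finset.range (r - 1), (if Admissible r a b c then Sfn q ((c : ℤ) + 1) else 0) := by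
    rw [Finset.mul_sum]
    apply Finset.sum_congr rfl
    intro c _
    by_cases hadm : Admissible r a b c
    · rw [if_pos hadm, if_pos hadm, Delta_eq]
      rw [neg_one_pow_adm a b c hadm.2.1 hadm.2.2.2.2.1]
      rw [← hqdef]
      field_simp
    · rw [if_neg hadm, if_neg hadm, mul_zero]
  rw [hsum]
  have hsum2 : (∑ c ∈ Finset.range (r - 1),
      (if Admissible r a b c then Sfn q ((c : ℤ) + 1) else 0))
      = Sfn q ((a : ℤ) + 1) * Sfn q ((b : ℤ) + 1) / Sfn q 1 := by
    rw [eq_div_iff hS1, mul_comm, ← hkey]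
  rw [hsum2, Delta_eq, Delta_eq]
  rw [← hqdef]
  field_simp

/-- Fusion rule for quantum dimensions: for all `a, b ∈ I`,
`Δ_a · Δ_b = ∑_{c ∈ I, (a,b,c) admissible} Δ_c`. -/
theorem fusion_rule (r a b : ℕ) (hr : 3 ≤ r) (ha : a ≤ r - 2) (hb : b ≤ r - 2) :
    Delta r a * Delta r b =
      ∑ c ∈ Finset.range (r - 1), if Admissible r a b c then Delta r c else 0 := by
  rcases le_total b a with hba | hab
  · exact fusion_aux r a b hr ha hb hba
  · rw [mul_comm, fusion_aux r b a hr hb ha hab]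
    apply Finset.sum_congr rfl
    intro c _
    rw [if_congr (Admissible_symm r b a c) rfl rfl]
end
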